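/- Assume Conjecture C4 holds. Let H be a linear hypergraph with n vertices and no rank-1 edges, let Δ be the maximum degree of H_3, and suppose every vertex x satisfies D(x, H_3) ≥ 2Δ. Then for any assignment of lists of size n to all edges of H, every list edge coloring of H_3 from these lists can be extended to a list edge coloring of H from these lists. -/

import Mathlib

open Finset

variable {V : Type*} [DecidableEq V]

/-- A proper list edge coloring of the hypergraph with edge set `E` from the lists `L`:
each edge gets a color from its list, and two distinct edges get the same color
only if they are disjoint. -/
def IsProperListColoring (E : Finset (Finset V)) (L : Finset V → Finset ℕ)
    (γ : Finset V → ℕ) : Prop :=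
  (∀ e ∈ E, γ e ∈ L e) ∧ ∀ e ∈ E, ∀ f ∈ E, e ≠ f → γ e = γ f → Disjoint e f

/-- `E` is `k`-list-edge-colorable: for every assignment of lists of size `k`
there is a proper list edge coloring. -/
def ListColorable (E : Finset (Finset V)) (k : ℕ) : Prop :=
  ∀ L : Finset V → Finset ℕ, (∀ e ∈ E, (L e).card = k) →
    ∃ γ : Finset V → ℕ, IsProperListColoring E L γ

/-- The list edge chromatic number `q_list`: the least `k` such that `E` is
`k`-list-edge-colorable. -/
noncomputable def qList (E : Finset (Finset V)) : ℕ :=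
  sInf {k | ListColorable E k}

/-- The degree of a vertex: the number of edges containing it. -/
def deg (E : Finset (Finset V)) (x : V) : ℕ := (E.filter fun e => x ∈ e).card

/-- The clique rank of an edge: `R(e) = ∑_{x ∈ e} (d(x) - 1)`. -/
def cliqueRank (E : Finset (Finset V)) (e : Finset V) : ℕ :=
  ∑ x ∈ e, (deg E x - 1)

/-- The clique degree of a vertex: `D(x) = ∑_{e ∋ x} (r(e) - 1)`. -/
def cliqueDeg (E : Finset (Finset V)) (x : V) : ℕ :=
  ∑ e ∈ E.filter (fun e => x ∈ e), (e.card - 1)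

/-- A hypergraph is linear if any two distinct edges meet in at most one vertex. -/
def Linear (E : Finset (Finset V)) : Prop :=
  ∀ e ∈ E, ∀ f ∈ E, e ≠ f → (e ∩ f).card ≤ 1

/-- The number of triangles with side `e`: unordered pairs `{f, g}` of edges
distinct from `e` such that `e, f, g` pairwise intersect. -/
def numTriangles (E : Finset (Finset V)) (e : Finset V) : ℕ :=
  (((E.erase e).powersetCard 2).filter fun p =>
    (∀ f ∈ p, (e ∩ f).Nonempty) ∧ ∀ f ∈ p, ∀ g ∈ p, f ≠ g → (f ∩ g).Nonempty).card

lemma listColorable_mono {E : Finset (Finset V)} {k k' : ℕ} (h : ListColorable E k)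
    (hk : k ≤ k') : ListColorable E k' := by
  classical
  intro L hL
  set L' : Finset V → Finset ℕ := fun e =>
    if hc : k ≤ (L e).card then (Finset.exists_subset_card_eq hc).choose else ∅ with hL'
  have key : ∀ e ∈ E, L' e ⊆ L e ∧ (L' e).card = k := by
    intro e he
    have hc : k ≤ (L e).card := by rw [hL e he]; exact hk
    have hspec := (Finset.exists_subset_card_eq hc).choose_spec
    simp only [hL', dif_pos hc]
    exact hspec
  obtain ⟨γ, h1, h2⟩ := h L' (fun e he => (key e he).2)
  exact ⟨γ, fun e he => (key e he).1 (h1 e he), h2⟩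

lemma exists_injOn_coloring (E : Finset (Finset V)) (L : Finset V → Finset ℕ)
    (hL : ∀ e ∈ E, E.card ≤ (L e).card) :
    ∃ γ : Finset V → ℕ, (∀ e ∈ E, γ e ∈ L e) ∧ Set.InjOn γ E := by
  classical
  induction E using Finset.strongInduction with
  | _ E ih =>
    rcases E.eq_empty_or_nonempty with rfl | ⟨e, he⟩
    · exact ⟨fun _ => 0, by simp, by simp⟩
    · obtain ⟨γ', h1, h2⟩ := ih (E.erase e) (Finset.erase_ssubset he) (fun f hf =>
        le_trans (Finset.card_le_card (Finset.erase_subset _ _))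
          (hL f (Finset.mem_of_mem_erase hf)))
      have hlt : ((E.erase e).image γ').card < (L e).card :=
        lt_of_le_of_lt Finset.card_image_le
          (lt_of_lt_of_le (Finset.card_erase_lt_of_mem he) (hL e he))
      have hex : (L e \ ((E.erase e).image γ')).Nonempty := by
        rw [← Finset.card_pos]
        have := Finset.le_card_sdiff ((E.erase e).image γ') (L e)
        omega
      obtain ⟨c, hc⟩ := hex
      rw [Finset.mem_sdiff] at hc
      refine ⟨fun f => if f = e then c else γ' f, ?_, ?_⟩
      · intro f hf
        by_cases hfe : f = e
        · simpa [hfe] using hc.1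
        · simpa [hfe] using h1 f (Finset.mem_erase.mpr ⟨hfe, hf⟩)
      · intro a ha b hb hab
        simp only [Finset.mem_coe] at ha hb
        by_cases hae : a = e <;> by_cases hbe : b = e
        · rw [hae, hbe]
        · exfalso
          apply hc.2
          simp only [if_pos hae, if_neg hbe] at hab
          rw [hab]
          exact Finset.mem_image_of_mem γ' (Finset.mem_erase.mpr ⟨hbe, hb⟩)
        · exfalso
          apply hc.2
          simp only [if_pos hbe, if_neg hae] at hab
          rw [← hab]
          exact Finset.mem_image_of_mem γ' (Finset.mem_erase.mpr ⟨hae, ha⟩)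
        · simp only [if_neg hae, if_neg hbe] at hab
          exact h2 (Finset.mem_coe.mpr (Finset.mem_erase.mpr ⟨hae, ha⟩))
            (Finset.mem_coe.mpr (Finset.mem_erase.mpr ⟨hbe, hb⟩)) hab

lemma listColorable_card (E : Finset (Finset V)) : ListColorable E E.card := by
  intro L hL
  obtain ⟨γ, h1, h2⟩ := exists_injOn_coloring E L (fun e he => (hL e he).ge)
  exact ⟨γ, h1, fun e he f hf hne heq => absurd (h2 (Finset.mem_coe.mpr he)
    (Finset.mem_coe.mpr hf) heq) hne⟩

lemma listColorable_of_qList_le {E : Finset (Finset V)} {m : ℕ} (h : qList E ≤ m) :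
    ListColorable E m := by
  have hne : {k | ListColorable E k}.Nonempty := ⟨E.card, listColorable_card E⟩
  exact listColorable_mono (Nat.sInf_mem hne) h

lemma deg_add_cliqueDeg_le [Fintype V] (E : Finset (Finset V)) (hlin : Linear E)
    (h2 : ∀ e ∈ E, 2 ≤ e.card) (x : V) :
    deg (E.filter fun e => e.card = 2) x + cliqueDeg (E.filter fun e => 3 ≤ e.card) x
      ≤ Fintype.card V - 1 := by
  classical
  set F := E.filter fun e => x ∈ e with hF
  have hdisj : ∀ e ∈ F, ∀ f ∈ F, e ≠ f → Disjoint (e.erase x) (f.erase x) := by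
    intro e he f hf hne
    rw [Finset.disjoint_left]
    intro y hye hyf
    rw [Finset.mem_erase] at hye hyf
    have hxe : x ∈ e := (Finset.mem_filter.mp he).2
    have hxf : x ∈ f := (Finset.mem_filter.mp hf).2
    have hsub : ({x, y} : Finset V) ⊆ e ∩ f := by
      intro z hz
      rw [Finset.mem_insert, Finset.mem_singleton] at hz
      rcases hz with rfl | rfl
      · exact Finset.mem_inter.mpr ⟨hxe, hxf⟩
      · exact Finset.mem_inter.mpr ⟨hye.2, hyf.2⟩
    have hcard : 2 ≤ (e ∩ f).card := by
      have hxy : ({x, y} : Finset V).card = 2 := Finset.card_pair (Ne.symm hye.1)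
      calc 2 = ({x, y} : Finset V).card := hxy.symm
        _ ≤ (e ∩ f).card := Finset.card_le_card hsub
    have := hlin e (Finset.mem_filter.mp he).1 f (Finset.mem_filter.mp hf).1 hne
    omega
  have hsum : ∑ e ∈ F, (e.card - 1) ≤ Fintype.card V - 1 := by
    have hh1 : ∑ e ∈ F, (e.card - 1) = ∑ e ∈ F, (e.erase x).card := by
      apply Finset.sum_congr rfl
      intro e he
      rw [Finset.card_erase_of_mem (Finset.mem_filter.mp he).2]
    have hh2 : ∑ e ∈ F, (e.erase x).card = (F.biUnion fun e => e.erase x).card :=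
      (Finset.card_biUnion hdisj).symm
    have hh3 : (F.biUnion fun e => e.erase x) ⊆ Finset.univ.erase x := by
      intro y hy
      rw [Finset.mem_biUnion] at hy
      obtain ⟨e, _, hye⟩ := hy
      exact Finset.mem_erase.mpr ⟨(Finset.mem_erase.mp hye).1, Finset.mem_univ y⟩
    have hh4 : (Finset.univ.erase x).card = Fintype.card V - 1 := by
      rw [Finset.card_erase_of_mem (Finset.mem_univ x), Finset.card_univ]
    rw [hh1, hh2, ← hh4]
    exact Finset.card_le_card hh3
  have hsplit : deg (E.filter fun e => e.card = 2) x
      + cliqueDeg (E.filter fun e => 3 ≤ e.card) x = ∑ e ∈ F, (e.card - 1) := by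
    have hA : deg (E.filter fun e => e.card = 2) x
        = ∑ e ∈ F.filter (fun e => e.card = 2), (e.card - 1) := by
      have hset : (E.filter fun e => e.card = 2).filter (fun e => x ∈ e)
          = F.filter (fun e => e.card = 2) := by
        rw [hF, Finset.filter_comm]
      rw [deg, hset, Finset.sum_congr rfl (fun e he => show e.card - 1 = 1 by
        have : e.card = 2 := (Finset.mem_filter.mp he).2
        omega)]
      simp
    have hB : cliqueDeg (E.filter fun e => 3 ≤ e.card) x
        = ∑ e ∈ F.filter (fun e => ¬ e.card = 2), (e.card - 1) := by
      rw [cliqueDeg, Finset.filter_filter, hF, Finset.filter_filter]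
      apply Finset.sum_congr _ (fun _ _ => rfl)
      apply Finset.filter_congr
      intro e he
      have := h2 e he
      constructor
      · intro h; exact ⟨h.2, by omega⟩
      · intro h; exact ⟨by omega, h.1⟩
    rw [hA, hB]
    exact Finset.sum_filter_add_sum_filter_not F _ _
  omega

/-- Assuming the weak Vizing list conjecture C4: if `H` is a linear hypergraph on `n`
vertices with no rank-1 edges, `Δ` is the maximum degree of `H₃` (edges of rank ≥ 3),
and every vertex satisfies `D(x, H₃) ≥ 2Δ`, then any list `n`-coloring of `H₃`
extends to a list `n`-coloring of `H`. -/
theorem stmt12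
    (C4 : ∀ (W : Type) [DecidableEq W] (G : Finset (Finset W)) (k : ℕ),
      (∀ e ∈ G, e.card = 2) → (∀ x : W, deg G x ≤ k) → qList G ≤ k + 1)
    {V : Type} [DecidableEq V] [Fintype V] (E : Finset (Finset V)) (Δ : ℕ)
    (hlin : Linear E) (h2 : ∀ e ∈ E, 2 ≤ e.card)
    (hΔ : Δ = Finset.univ.sup (deg (E.filter fun e => 3 ≤ e.card)))
    (hD : ∀ x : V, 2 * Δ ≤ cliqueDeg (E.filter fun e => 3 ≤ e.card) x)
    (L : Finset V → Finset ℕ) (hL : ∀ e ∈ E, (L e).card = Fintype.card V)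
    (γ3 : Finset V → ℕ)
    (hγ3 : IsProperListColoring (E.filter fun e => 3 ≤ e.card) L γ3) :
    ∃ γ : Finset V → ℕ, IsProperListColoring E L γ ∧
      ∀ e ∈ E.filter (fun e => 3 ≤ e.card), γ e = γ3 e := by
  classical
  rcases isEmpty_or_nonempty V with hemp | hne
  · have hE : E = ∅ := by
      rw [Finset.eq_empty_iff_forall_notMem]
      intro e he
      have h := h2 e he
      have he0 : e = ∅ := Finset.eq_empty_of_isEmpty e
      rw [he0] at h
      simp at h
    subst hE
    exact ⟨γ3, ⟨by simp, by simp⟩, by simp⟩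
  obtain ⟨x0⟩ := hne
  set n := Fintype.card V with hn
  set E3 := E.filter fun e => 3 ≤ e.card with hE3
  set E2 := E.filter fun e => e.card = 2 with hE2
  have hdegbound : ∀ x, deg E2 x + cliqueDeg E3 x ≤ n - 1 := fun x =>
    deg_add_cliqueDeg_le E hlin h2 x
  have hnpos : 1 ≤ n := Fintype.card_pos_iff.mpr ⟨x0⟩
  have hΔle : 2 * Δ + 1 ≤ n := by
    have h1 := hD x0
    have h2' := hdegbound x0
    omega
  have hdeg2 : ∀ x, deg E2 x ≤ n - 1 - 2 * Δ := fun x => by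
    have := hD x; have := hdegbound x; omega
  have hq := C4 V E2 (n - 1 - 2 * Δ) (fun e he => (Finset.mem_filter.mp he).2) hdeg2
  have hcol : ListColorable E2 (n - 1 - 2 * Δ + 1) := listColorable_of_qList_le hq
  set forb : Finset V → Finset ℕ :=
    fun e => (E3.filter fun f => ¬ Disjoint e f).image γ3 with hforbdef
  have hforb : ∀ e ∈ E2, (forb e).card ≤ 2 * Δ := by
    intro e he
    obtain ⟨a, b, hab, habe⟩ := Finset.card_eq_two.mp (Finset.mem_filter.mp he).2
    have hsub : E3.filter (fun f => ¬ Disjoint e f)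
        ⊆ (E3.filter fun f => a ∈ f) ∪ (E3.filter fun f => b ∈ f) := by
      intro f hf
      rw [Finset.mem_filter] at hf
      obtain ⟨hfE3, hfd⟩ := hf
      rw [Finset.not_disjoint_iff] at hfd
      obtain ⟨y, hye, hyf⟩ := hfd
      rw [habe, Finset.mem_insert, Finset.mem_singleton] at hye
      rcases hye with rfl | rfl
      · exact Finset.mem_union_left _ (Finset.mem_filter.mpr ⟨hfE3, hyf⟩)
      · exact Finset.mem_union_right _ (Finset.mem_filter.mpr ⟨hfE3, hyf⟩)
    have hdega : deg E3 a ≤ Δ := hΔ ▸ Finset.le_sup (Finset.mem_univ a)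
    have hdegb : deg E3 b ≤ Δ := hΔ ▸ Finset.le_sup (Finset.mem_univ b)
    calc (forb e).card ≤ (E3.filter fun f => ¬ Disjoint e f).card := Finset.card_image_le
      _ ≤ ((E3.filter fun f => a ∈ f) ∪ (E3.filter fun f => b ∈ f)).card :=
        Finset.card_le_card hsub
      _ ≤ deg E3 a + deg E3 b := Finset.card_union_le _ _
      _ ≤ 2 * Δ := by omega
  have hLsd : ∀ e ∈ E2, n - 1 - 2 * Δ + 1 ≤ (L e \ forb e).card := by
    intro e he
    have h1 := hforb e he
    have h2' : (L e).card = n := hL e (Finset.mem_filter.mp he).1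
    have := Finset.le_card_sdiff (forb e) (L e)
    omega
  set L' : Finset V → Finset ℕ := fun e =>
    if hc : n - 1 - 2 * Δ + 1 ≤ (L e \ forb e).card
    then (Finset.exists_subset_card_eq hc).choose else ∅ with hL'def
  have hL'key : ∀ e ∈ E2, L' e ⊆ L e \ forb e ∧ (L' e).card = n - 1 - 2 * Δ + 1 := by
    intro e he
    have hc := hLsd e he
    have hspec := (Finset.exists_subset_card_eq hc).choose_spec
    simp only [hL'def, dif_pos hc]
    exact hspec
  obtain ⟨γ2, hγ2mem, hγ2prop⟩ := hcol L' (fun e he => (hL'key e he).2)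
  have hmemE2 : ∀ e ∈ E, ¬ 3 ≤ e.card → e ∈ E2 := by
    intro e he h3
    have := h2 e he
    exact Finset.mem_filter.mpr ⟨he, by omega⟩
  refine ⟨fun e => if 3 ≤ e.card then γ3 e else γ2 e, ⟨?_, ?_⟩, ?_⟩
  · intro e he
    by_cases h3 : 3 ≤ e.card
    · simpa [h3] using hγ3.1 e (Finset.mem_filter.mpr ⟨he, h3⟩)
    · have he2 := hmemE2 e he h3
      have hmem := (hL'key e he2).1 (hγ2mem e he2)
      rw [Finset.mem_sdiff] at hmem
      simpa [h3] using hmem.1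
  · intro e he f hf hne heq
    by_cases h3e : 3 ≤ e.card <;> by_cases h3f : 3 ≤ f.card
    · simp only [if_pos h3e, if_pos h3f] at heq
      exact hγ3.2 e (Finset.mem_filter.mpr ⟨he, h3e⟩) f (Finset.mem_filter.mpr ⟨hf, h3f⟩) hne heq
    · -- e in E3, f in E2
      simp only [if_pos h3e, if_neg h3f] at heq
      have hf2 := hmemE2 f hf h3f
      have hmem := (hL'key f hf2).1 (hγ2mem f hf2)
      rw [Finset.mem_sdiff] at hmem
      by_contra hnd
      apply hmem.2
      rw [show γ2 f = γ3 e from heq.symm]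
      exact Finset.mem_image_of_mem γ3 (Finset.mem_filter.mpr
        ⟨Finset.mem_filter.mpr ⟨he, h3e⟩, fun h => hnd h.symm⟩)
    · simp only [if_neg h3e, if_pos h3f] at heq
      have he2 := hmemE2 e he h3e
      have hmem := (hL'key e he2).1 (hγ2mem e he2)
      rw [Finset.mem_sdiff] at hmem
      by_contra hnd
      apply hmem.2
      rw [heq]
      exact Finset.mem_image_of_mem γ3 (Finset.mem_filter.mpr
        ⟨Finset.mem_filter.mpr ⟨hf, h3f⟩, hnd⟩)
    · simp only [if_neg h3e, if_neg h3f] at heq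
      exact hγ2prop e (hmemE2 e he h3e) f (hmemE2 f hf h3f) hne heq
  · intro e he
    have h3 := (Finset.mem_filter.mp he).2
    simp [h3]
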